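/- Let R be a commutative Noetherian ring and M a finitely generated R-module such that the trace ideal τ(M) contains a nonzerodivisor of R. Then the map ρ : End_R(τ(M)) → End_R(Hom_R(M,R)) which sends g ∈ End_R(τ(M)) to the endomorphism α ↦ g∘α (well defined since every α ∈ Hom_R(M,R) has image contained in τ(M)) is an injective R-algebra homomorphism whose image is exactly the center of End_R(Hom_R(M,R)); in particular End_R(τ(M)) is isomorphic as an R-algebra to the center of End_R(Hom_R(M,R)). -/

import Mathlib

universe u v

/-- The trace ideal of a module: the ideal generated by all images of maps `M →ₗ[R] R`. -/
def traceIdeal (R : Type u) (M : Type v) [CommRing R] [AddCommGroup M] [Module R M] :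
    Ideal R :=
  ⨆ f : M →ₗ[R] R, LinearMap.range f

theorem apply_mem_traceIdeal {R : Type u} {M : Type v} [CommRing R] [AddCommGroup M]
    [Module R M] (f : M →ₗ[R] R) (m : M) : f m ∈ traceIdeal R M :=
  Submodule.mem_iSup_of_mem f (LinearMap.mem_range_self f m)

section Aux

variable {R : Type u} {M : Type v} [CommRing R] [AddCommGroup M] [Module R M]

/-- `ρ g α = g ∘ α` as a linear functional. -/
def rho1 (g : Module.End R (traceIdeal R M)) (α : Module.Dual R M) : Module.Dual R M :=
  (traceIdeal R M).subtype ∘ₗ g ∘ₗ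
    LinearMap.codRestrict (traceIdeal R M) α (apply_mem_traceIdeal α)

@[simp] lemma rho1_apply (g : Module.End R (traceIdeal R M)) (α : Module.Dual R M) (m : M) :
    rho1 g α m = (g ⟨α m, apply_mem_traceIdeal α m⟩ : R) := rfl

/-- `ρ g` as an endomorphism of the dual module. -/
def rho (g : Module.End R (traceIdeal R M)) : Module.End R (Module.Dual R M) where
  toFun := rho1 g
  map_add' α β := by
    ext m
    simp only [rho1_apply, LinearMap.add_apply]
    exact congrArg Subtype.val
      (map_add g ⟨α m, apply_mem_traceIdeal α m⟩ ⟨β m, apply_mem_traceIdeal β m⟩)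
  map_smul' c α := by
    ext m
    simp only [rho1_apply, LinearMap.smul_apply, RingHom.id_apply, smul_eq_mul]
    exact congrArg Subtype.val (map_smul g c ⟨α m, apply_mem_traceIdeal α m⟩)

@[simp] lemma rho_apply (g : Module.End R (traceIdeal R M)) (α : Module.Dual R M) (m : M) :
    rho g α m = (g ⟨α m, apply_mem_traceIdeal α m⟩ : R) := rfl

/-- Key commutation: `g x * r = x * g r` for `x, r` in the trace ideal. -/
lemma end_comm (g : Module.End R (traceIdeal R M)) (x : traceIdeal R M)
    {r : R} (hr : r ∈ traceIdeal R M) :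
    (g x : R) * r = (x : R) * (g ⟨r, hr⟩ : R) := by
  have h1 : (x : R) • (⟨r, hr⟩ : traceIdeal R M) = r • x := by
    apply Subtype.ext
    simp [mul_comm]
  have h2 := congrArg g h1
  rw [map_smul, map_smul] at h2
  have h3 := congrArg (Subtype.val) h2
  simp only [SetLike.val_smul, smul_eq_mul] at h3
  rw [mul_comm ((g x : R)) r, ← h3]

end Aux

theorem trace_end_iso_center_of_dual (R : Type u) (M : Type v) [CommRing R]
    [IsNoetherianRing R] [AddCommGroup M] [Module R M] [Module.Finite R M]
    (hreg : ∃ r ∈ traceIdeal R M, r ∈ nonZeroDivisors R) :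
    (∃ ρ : Module.End R (traceIdeal R M) →ₐ[R] Module.End R (Module.Dual R M),
      (∀ (g : Module.End R (traceIdeal R M)) (α : Module.Dual R M) (m : M),
        (ρ g α) m = (g ⟨α m, apply_mem_traceIdeal α m⟩ : R)) ∧
      Function.Injective ρ ∧
      ρ.range = Subalgebra.center R (Module.End R (Module.Dual R M))) ∧
    Nonempty (Module.End R (traceIdeal R M) ≃ₐ[R]
      Subalgebra.center R (Module.End R (Module.Dual R M))) := by
  obtain ⟨r, hrτ, hr⟩ := hreg
  set τ := traceIdeal R M with hτ
  have hmul : ∀ g g' : Module.End R τ, rho (g * g') = rho g * rho g' := by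
    intro g g'
    refine LinearMap.ext fun α => LinearMap.ext fun m => ?_
    rfl
  let ρ : Module.End R τ →ₐ[R] Module.End R (Module.Dual R M) :=
    { toFun := rho
      map_one' := by
        refine LinearMap.ext fun α => LinearMap.ext fun m => ?_
        rfl
      map_mul' := hmul
      map_zero' := by
        refine LinearMap.ext fun α => LinearMap.ext fun m => ?_
        rfl
      map_add' := by
        intro g g'
        refine LinearMap.ext fun α => LinearMap.ext fun m => ?_
        rfl
      commutes' := by
        intro c
        refine LinearMap.ext fun α => LinearMap.ext fun m => ?_
        rfl }
  have hρapp : ∀ (g : Module.End R τ) (α : Module.Dual R M) (m : M),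
      (ρ g α) m = (g ⟨α m, apply_mem_traceIdeal α m⟩ : R) := fun g α m => rfl
  -- injectivity
  have hinj : Function.Injective ρ := by
    rw [injective_iff_map_eq_zero]
    intro g hg
    refine LinearMap.ext fun x => ?_
    obtain ⟨x, hx⟩ := x
    show g ⟨x, hx⟩ = 0
    refine Submodule.iSup_induction'
      (p := fun f : M →ₗ[R] R => LinearMap.range f)
      (motive := fun x hx => g ⟨x, hx⟩ = 0) ?_ ?_ ?_ hx
    · rintro f y ⟨m, rfl⟩
      have h0 : (ρ g) f = 0 := by rw [hg]; rfl
      exact Subtype.ext (LinearMap.congr_fun h0 m)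
    · exact map_zero g
    · intro a b ha hb iha ihb
      have e : (⟨a + b, add_mem ha hb⟩ : τ) = ⟨a, ha⟩ + ⟨b, hb⟩ := rfl
      rw [e, map_add, iha, ihb, add_zero]
  -- cancellation by r
  have hcancel : ∀ a b : R, a * r = b * r → a = b := fun a b h =>
    (mul_cancel_right_mem_nonZeroDivisors hr).mp h
  have hsmulDual : ∀ β γ : Module.Dual R M, r • β = r • γ → β = γ := by
    intro β γ h
    ext m
    have := LinearMap.congr_fun h m
    simp only [LinearMap.smul_apply, smul_eq_mul] at this
    exact hcancel _ _ (by rw [mul_comm (β m) r, mul_comm (γ m) r]; exact this)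
  -- ρ g is "multiplication by g r / r"
  have hscal : ∀ (g : Module.End R τ) (α : Module.Dual R M),
      r • (ρ g α) = (g ⟨r, hrτ⟩ : R) • α := by
    intro g α
    ext m
    simp only [LinearMap.smul_apply, smul_eq_mul, hρapp]
    rw [mul_comm r _, end_comm g _ hrτ, mul_comm]
  -- range ⊆ center
  have hcentral : ∀ g : Module.End R τ,
      ρ g ∈ Subalgebra.center R (Module.End R (Module.Dual R M)) := by
    intro g
    rw [Subalgebra.mem_center_iff]
    intro h
    refine LinearMap.ext fun α => ?_
    simp only [Module.End.mul_apply]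
    apply hsmulDual
    rw [hscal, ← map_smul, hscal, map_smul]
  -- center ⊆ range
  have hsurj : ∀ φ : Module.End R (Module.Dual R M),
      φ ∈ Subalgebra.center R (Module.End R (Module.Dual R M)) →
      ∃ g : Module.End R τ, ρ g = φ := by
    intro φ hφ
    rw [Subalgebra.mem_center_iff] at hφ
    have starR : ∀ (β γ : Module.Dual R M) (m n : M),
        γ m * φ β n = (φ γ) m * β n := by
      intro β γ m n
      let h : Module.End R (Module.Dual R M) :=
        { toFun := fun δ => δ m • β
          map_add' := fun δ δ' => by simp [add_smul]
          map_smul' := fun c δ => by simp [mul_smul] }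
      have h1 := LinearMap.congr_fun (hφ h) γ
      have h2 := LinearMap.congr_fun h1 n
      simpa [h, Module.End.mul_apply, mul_comm] using h2.symm
    -- find s with ∀ γ m, φ γ m * r = γ m * s
    obtain ⟨s, hs⟩ : ∃ s : R, ∀ (γ : Module.Dual R M) (m : M), (φ γ) m * r = γ m * s := by
      refine Submodule.iSup_induction (motive := fun x : R =>
        ∃ s : R, ∀ (γ : Module.Dual R M) (m : M), (φ γ) m * x = γ m * s)
        (fun f : M →ₗ[R] R => LinearMap.range f) hrτ ?_ ⟨0, by simp⟩ ?_
      · rintro β x ⟨n, rfl⟩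
        exact ⟨φ β n, fun γ m => (starR β γ m n).symm⟩
      · rintro x y ⟨s, hsx⟩ ⟨t, hty⟩
        exact ⟨s + t, fun γ m => by rw [mul_add, mul_add, hsx, hty]⟩
    -- for every x ∈ τ there is y ∈ τ with y * r = x * s
    have hex0 : ∀ x ∈ τ, ∃ y ∈ τ, y * r = x * s := by
      intro x hx
      refine Submodule.iSup_induction (motive := fun x : R => ∃ y ∈ τ, y * r = x * s)
        (fun f : M →ₗ[R] R => LinearMap.range f) hx ?_ ⟨0, zero_mem _, by simp⟩ ?_
      · rintro f z ⟨m, rfl⟩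
        exact ⟨(φ f) m, apply_mem_traceIdeal (φ f) m, hs f m⟩
      · rintro x y ⟨a, ha, hae⟩ ⟨b, hb, hbe⟩
        exact ⟨a + b, add_mem ha hb, by rw [add_mul, add_mul, hae, hbe]⟩
    have hex : ∀ x : τ, ∃ y : τ, (y : R) * r = (x : R) * s := by
      rintro ⟨x, hx⟩
      obtain ⟨y, hy, he⟩ := hex0 x hx
      exact ⟨⟨y, hy⟩, he⟩
    choose gfun hgfun using hex
    have guniq : ∀ (x : τ) (y : τ), (y : R) * r = (x : R) * s → gfun x = y := by
      intro x y hy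
      apply Subtype.ext
      exact hcancel _ _ (by rw [hgfun x, hy])
    let g : Module.End R τ :=
      { toFun := gfun
        map_add' := fun x y => guniq (x + y) (gfun x + gfun y) (by
          simp only [Submodule.coe_add, add_mul, hgfun])
        map_smul' := fun c x => guniq (c • x) (c • gfun x) (by
          simp only [SetLike.val_smul, smul_eq_mul, mul_assoc, hgfun]) }
    refine ⟨g, ?_⟩
    refine LinearMap.ext fun α => LinearMap.ext fun m => ?_
    apply hcancel
    show (gfun ⟨α m, apply_mem_traceIdeal α m⟩ : R) * r = (φ α) m * r
    rw [hgfun, hs α m]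
  have hrange : ρ.range = Subalgebra.center R (Module.End R (Module.Dual R M)) := by
    ext φ
    constructor
    · rintro ⟨g, rfl⟩; exact hcentral g
    · intro hφ; obtain ⟨g, hg⟩ := hsurj φ hφ; exact ⟨g, hg⟩
  exact ⟨⟨ρ, hρapp, hinj, hrange⟩,
    ⟨(AlgEquiv.ofInjective ρ hinj).trans (Subalgebra.equivOfEq _ _ hrange)⟩⟩
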